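/- Let Ω ⊆ ℝ and let γ₀ ∈ ℝ be an accumulation point of Ω \ {γ₀}. Let β₁ : ℝ → ℂ be differentiable at γ₀ with β₁(γ₀) = 0, let D₁ : ℝ → ℂ be continuous at γ₀ with D₁(γ₀) ≠ 0, and set α = β₁′(γ₀)/D₁(γ₀); assume Re(α) ≠ 0. Let P₁ : Ω → ℂ satisfy P₁(γ) ≠ 0 for all γ ∈ Ω and |P₁(γ)| → 0 as γ → γ₀ within Ω, and suppose there is C ≥ 0 such that | |P₁(γ)|²·D₁(γ) − β₁(γ) | ≤ C·|P₁(γ)|⁴ for all γ ∈ Ω. Then: (a) α is a real number, i.e. Im(α) = 0; and (b) there exists δ > 0 such that for every γ ∈ Ω with 0 < |γ − γ₀| < δ one has Re(α)·(γ − γ₀) > 0. (Hence the bifurcation is direct if α > 0, i.e. the oscillating branch exists only for γ > γ₀, and inverse if α < 0.) -/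

import Mathlib

open Filter Topology

set_option maxHeartbeats 1000000 in
theorem stmt14 (Ω : Set ℝ) (γ₀ : ℝ) (hacc : γ₀ ∈ closure (Ω \ {γ₀}))
    (β₁ D₁ : ℝ → ℂ) (β₁' : ℂ) (hβ : HasDerivAt β₁ β₁' γ₀) (hβ0 : β₁ γ₀ = 0)
    (hD : ContinuousAt D₁ γ₀) (hD0 : D₁ γ₀ ≠ 0)
    (α : ℂ) (hα : α = β₁' / D₁ γ₀) (hRe : α.re ≠ 0)
    (P₁ : ℝ → ℂ) (hP0 : ∀ γ ∈ Ω, P₁ γ ≠ 0)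
    (hPlim : Filter.Tendsto (fun γ => ‖P₁ γ‖) (nhdsWithin γ₀ Ω) (nhds 0))
    (C : ℝ) (hC : 0 ≤ C)
    (hamp : ∀ γ ∈ Ω, ‖((‖P₁ γ‖ : ℂ)) ^ 2 * D₁ γ - β₁ γ‖ ≤ C * ‖P₁ γ‖ ^ 4) :
    α.im = 0 ∧
      ∃ δ > 0, ∀ γ ∈ Ω, γ ≠ γ₀ → |γ - γ₀| < δ → 0 < α.re * (γ - γ₀) := by
  set L := nhdsWithin γ₀ (Ω \ {γ₀}) with hLdef
  have hne : L.NeBot := mem_closure_iff_nhdsWithin_neBot.mp hacc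
  have hLne : L ≤ nhdsWithin γ₀ {γ₀}ᶜ := nhdsWithin_mono _ (fun x hx => hx.2)
  have hLΩ : L ≤ nhdsWithin γ₀ Ω := nhdsWithin_mono _ (fun x hx => hx.1)
  have hLn : L ≤ nhds γ₀ := nhdsWithin_le_nhds
  set F : ℝ → ℂ := fun γ => β₁ γ / ((γ - γ₀ : ℝ) : ℂ) / D₁ γ with hFdef
  -- limit of F is α
  have hslope : Filter.Tendsto (fun γ => β₁ γ / ((γ - γ₀ : ℝ) : ℂ))
      (nhdsWithin γ₀ {γ₀}ᶜ) (nhds β₁') := by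
    have h := hasDerivAt_iff_tendsto_slope.mp hβ
    refine h.congr' ?_
    filter_upwards [self_mem_nhdsWithin] with γ hγ
    show (γ - γ₀)⁻¹ • (β₁ γ - β₁ γ₀) = β₁ γ / ((γ - γ₀ : ℝ) : ℂ)
    rw [hβ0, sub_zero, Complex.real_smul, Complex.ofReal_inv]
    ring
  have hF : Filter.Tendsto F L (nhds α) := by
    rw [hα]
    exact ((hslope.mono_left hLne).div (hD.tendsto.mono_left hLn) hD0)
  -- constants
  have hd0 : (0:ℝ) < ‖D₁ γ₀‖ := norm_pos_iff.mpr hD0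
  set d : ℝ := ‖D₁ γ₀‖ / 2 with hddef
  have hd : 0 < d := by positivity
  -- eventual facts
  have hEd : ∀ᶠ γ in L, d ≤ ‖D₁ γ‖ := by
    have h1 : ∀ᶠ γ in L, ‖D₁ γ - D₁ γ₀‖ < d := by
      have := (hD.tendsto.mono_left hLn).eventually
        (Metric.eventually_nhds_iff_ball.mpr ⟨d, hd, fun z hz => hz⟩)
      filter_upwards [this] with γ hγ
      simpa [Metric.mem_ball, dist_eq_norm] using hγ
    filter_upwards [h1] with γ hγ
    have h2 : ‖D₁ γ₀‖ - ‖D₁ γ‖ ≤ ‖D₁ γ₀ - D₁ γ‖ := norm_sub_norm_le _ _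
    have h3 : ‖D₁ γ₀ - D₁ γ‖ = ‖D₁ γ - D₁ γ₀‖ := norm_sub_rev _ _
    have h4 : ‖D₁ γ₀‖ = 2 * d := by rw [hddef]; ring
    linarith
  have hEp : ∀ᶠ γ in L, ‖P₁ γ‖ ^ 2 ≤ d / (2 * (C + 1)) := by
    have hε : (0:ℝ) < Real.sqrt (d / (2 * (C + 1))) := Real.sqrt_pos.mpr (by positivity)
    have h1 : ∀ᶠ γ in L, ‖P₁ γ‖ < Real.sqrt (d / (2 * (C + 1))) := by
      have := (hPlim.mono_left hLΩ).eventually (gt_mem_nhds hε)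
      exact this
    filter_upwards [h1] with γ hγ
    have h2 : ‖P₁ γ‖ ^ 2 ≤ Real.sqrt (d / (2 * (C + 1))) ^ 2 := by
      apply pow_le_pow_left₀ (norm_nonneg _) hγ.le
    rwa [Real.sq_sqrt (by positivity)] at h2
  have hmem : ∀ᶠ γ in L, γ ∈ Ω ∧ γ ≠ γ₀ := by
    filter_upwards [self_mem_nhdsWithin] with γ hγ
    exact ⟨hγ.1, hγ.2⟩
  have hFb : ∀ᶠ γ in L, ‖F γ‖ ≤ ‖α‖ + 1 := by
    have := hF.eventually (Metric.eventually_nhds_iff_ball.mpr ⟨1, one_pos, fun z hz => hz⟩)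
    filter_upwards [this] with γ hγ
    have h2 : ‖F γ - α‖ < 1 := by simpa [Metric.mem_ball, dist_eq_norm] using hγ
    calc ‖F γ‖ = ‖(F γ - α) + α‖ := by ring_nf
      _ ≤ ‖F γ - α‖ + ‖α‖ := norm_add_le _ _
      _ ≤ ‖α‖ + 1 := by linarith
  set K : ℝ := 4 * C * (‖α‖ + 1) ^ 2 / d with hKdef
  -- core pointwise estimates
  have hcore : ∀ᶠ γ in L, 0 < (β₁ γ / D₁ γ).re ∧
      (F γ).re = (β₁ γ / D₁ γ).re / (γ - γ₀) ∧ |(F γ).im| ≤ K * |γ - γ₀| := by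
    filter_upwards [hEd, hEp, hmem, hFb] with γ hγd hγp ⟨hγΩ, hγne⟩ hγF
    set p : ℝ := ‖P₁ γ‖ with hpdef
    set t : ℝ := γ - γ₀ with htdef
    have ht : t ≠ 0 := sub_ne_zero.mpr hγne
    have hp : 0 < p := norm_pos_iff.mpr (hP0 γ hγΩ)
    have hDγ : D₁ γ ≠ 0 := by
      intro h; rw [h, norm_zero] at hγd; linarith
    set g : ℂ := ((p:ℂ)) ^ 2 * D₁ γ - β₁ γ with hgdef
    have hg : ‖g‖ ≤ C * p ^ 4 := hamp γ hγΩ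
    set f : ℂ := β₁ γ / D₁ γ with hfdef
    have hfe : f = (p:ℂ) ^ 2 - g / D₁ γ := by
      rw [hfdef, hgdef]
      field_simp
      ring
    have hgD : ‖g / D₁ γ‖ ≤ C * p ^ 4 / d := by
      rw [norm_div]
      apply div_le_div₀ (by positivity) hg (by positivity) hγd
    have hγp' : p ^ 2 * (2 * (C + 1)) ≤ d := by
      rw [le_div_iff₀ (by positivity : (0:ℝ) < 2 * (C + 1))] at hγp
      exact hγp
    have hsmall : C * p ^ 4 / d ≤ p ^ 2 / 2 := by
      rw [div_le_div_iff₀ hd two_pos]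
      nlinarith [mul_le_mul_of_nonneg_left hγp' (sq_nonneg p), sq_nonneg (p ^ 2)]
    have hre : p ^ 2 / 2 ≤ f.re := by
      have h1 : f.re = p ^ 2 - (g / D₁ γ).re := by
        rw [hfe]; simp [← Complex.ofReal_pow]
      have h2 : |(g / D₁ γ).re| ≤ C * p ^ 4 / d :=
        le_trans (Complex.abs_re_le_norm _) hgD
      have := abs_le.mp h2
      linarith
    have him : |f.im| ≤ C * p ^ 4 / d := by
      have h1 : f.im = -(g / D₁ γ).im := by
        rw [hfe]; simp [← Complex.ofReal_pow]
      rw [h1, abs_neg]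
      exact le_trans (Complex.abs_im_le_norm _) hgD
    have hFf : F γ = f / ((t : ℝ) : ℂ) := by
      rw [hFdef, hfdef]
      simp only [htdef]
      ring
    have hfre : 0 < f.re := lt_of_lt_of_le (by positivity) hre
    refine ⟨hfre, ?_, ?_⟩
    · rw [hFf, Complex.div_ofReal_re]
    · -- imaginary bound
      have hnf : ‖f‖ ≤ (‖α‖ + 1) * |t| := by
        have h1 : ‖F γ‖ = ‖f‖ / |t| := by
          rw [hFf, norm_div, Complex.norm_real, Real.norm_eq_abs]
        have h2 : ‖f‖ / |t| ≤ ‖α‖ + 1 := h1 ▸ hγF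
        have ht' : 0 < |t| := abs_pos.mpr ht
        calc ‖f‖ = ‖f‖ / |t| * |t| := by field_simp
          _ ≤ (‖α‖ + 1) * |t| := by
            apply mul_le_mul_of_nonneg_right h2 (abs_nonneg _)
      have hp2f : p ^ 2 ≤ 2 * ‖f‖ := by
        have h1 : f.re ≤ ‖f‖ := le_trans (le_abs_self _) (Complex.abs_re_le_norm f)
        linarith
      have hp4 : p ^ 4 ≤ 4 * (‖α‖ + 1) ^ 2 * t ^ 2 := by
        have h1 : p ^ 4 = (p ^ 2) ^ 2 := by ring
        have h2 : (p ^ 2) ^ 2 ≤ (2 * ‖f‖) ^ 2 := by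
          apply pow_le_pow_left₀ (by positivity) hp2f
        have h3 : ‖f‖ ^ 2 ≤ ((‖α‖ + 1) * |t|) ^ 2 := by
          apply pow_le_pow_left₀ (norm_nonneg _) hnf
        have h4 : ((‖α‖ + 1) * |t|) ^ 2 = (‖α‖ + 1) ^ 2 * t ^ 2 := by
          rw [mul_pow, sq_abs]
        nlinarith [norm_nonneg f]
      have hFim : (F γ).im = f.im / t := by
        rw [hFf, Complex.div_ofReal_im]
      rw [hFim, abs_div]
      rw [div_le_iff₀ (abs_pos.mpr ht)]
      have h5 : K * |t| * |t| = K * t ^ 2 := by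
        rw [mul_assoc, ← abs_mul, ← sq, abs_of_nonneg (sq_nonneg t)]
      rw [h5]
      have him2 : |f.im| * d ≤ C * p ^ 4 := (le_div_iff₀ hd).mp him
      have h6 : K * t ^ 2 = C * (4 * (‖α‖ + 1) ^ 2 * t ^ 2) / d := by
        rw [hKdef]; ring
      rw [h6, le_div_iff₀ hd]
      calc |f.im| * d ≤ C * p ^ 4 := him2
        _ ≤ C * (4 * (‖α‖ + 1) ^ 2 * t ^ 2) := mul_le_mul_of_nonneg_left hp4 hC
  -- part (a)
  have hIm : α.im = 0 := by
    have h1 : Filter.Tendsto (fun γ => (F γ).im) L (nhds α.im) :=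
      (Complex.continuous_im.tendsto α).comp hF
    have h2 : Filter.Tendsto (fun γ => (F γ).im) L (nhds 0) := by
      have hbound : ∀ᶠ γ in L, ‖(F γ).im‖ ≤ K * |γ - γ₀| := by
        filter_upwards [hcore] with γ hγ
        simpa [Real.norm_eq_abs] using hγ.2.2
      have hg0 : Filter.Tendsto (fun γ : ℝ => K * |γ - γ₀|) L (nhds 0) := by
        have h3 : Filter.Tendsto (fun γ : ℝ => K * |γ - γ₀|) (nhds γ₀) (nhds (K * |γ₀ - γ₀|)) := by
          apply Filter.Tendsto.const_mul
          exact (continuous_abs.comp (continuous_id.sub continuous_const)).tendsto γ₀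
        simpa using h3.mono_left hLn
      exact squeeze_zero_norm' hbound hg0
    exact tendsto_nhds_unique h1 h2
  refine ⟨hIm, ?_⟩
  -- part (b)
  have h3 : Filter.Tendsto (fun γ => (F γ).re) L (nhds α.re) :=
    (Complex.continuous_re.tendsto α).comp hF
  have h4 : ∀ᶠ γ in L, |(F γ).re - α.re| < |α.re| :=
    h3.eventually (eventually_abs_sub_lt α.re (abs_pos.mpr hRe))
  have hfinal : ∀ᶠ γ in L, 0 < α.re * (γ - γ₀) := by
    filter_upwards [hcore, h4, hmem] with γ ⟨hfre, hFre, _⟩ h4γ ⟨hγΩ, hγne⟩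
    set t : ℝ := γ - γ₀ with htdef
    have ht : t ≠ 0 := sub_ne_zero.mpr hγne
    have h5 : 0 < α.re * (F γ).re := by
      rcases lt_trichotomy α.re 0 with h | h | h
      · have := abs_lt.mp h4γ
        rw [abs_of_neg h] at this
        nlinarith
      · exact absurd h hRe
      · have := abs_lt.mp h4γ
        rw [abs_of_pos h] at this
        nlinarith
    rw [hFre] at h5
    have h6 : 0 < α.re * ((β₁ γ / D₁ γ).re / t) * (t ^ 2 / (β₁ γ / D₁ γ).re) :=
      mul_pos h5 (div_pos (sq_pos_of_ne_zero ht) hfre)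
    have h7 : α.re * ((β₁ γ / D₁ γ).re / t) * (t ^ 2 / (β₁ γ / D₁ γ).re) = α.re * t := by
      field_simp
    rwa [h7] at h6
  rw [hLdef] at hfinal
  obtain ⟨δ, hδ, hδ'⟩ := Metric.mem_nhdsWithin_iff.mp hfinal
  refine ⟨δ, hδ, fun γ hγΩ hγne hγd => ?_⟩
  exact hδ' ⟨by rwa [Metric.mem_ball, Real.dist_eq], ⟨hγΩ, hγne⟩⟩
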